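/- Let f be a univariate polynomial of degree 4 with rational coefficients such that the function x ↦ f(x) is convex on ℝ. Then f attains its global minimum at a unique point x* ∈ ℝ, and if the minimum value f(x*) is rational, then the minimizer x* is rational. -/

import Mathlib

open Polynomial Filter

/-- A convex univariate degree-4 polynomial with rational coefficients
attains its global minimum at a unique point `x*`; if the minimum value is rational
then the minimizer `x*` is rational. -/
theorem convex_quartic_rational_min_implies_rational_minimizer
    (f : Polynomial ℚ) (hdeg : f.degree = 4)
    (hconv : ConvexOn ℝ Set.univ fun x : ℝ => Polynomial.aeval x f) :
    ∃ xstar : ℝ,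
      (∀ x : ℝ, Polynomial.aeval xstar f ≤ Polynomial.aeval x f) ∧
      (∀ y : ℝ, (∀ x : ℝ, Polynomial.aeval y f ≤ Polynomial.aeval x f) → y = xstar) ∧
      ((∃ q : ℚ, (Polynomial.aeval xstar f : ℝ) = (q : ℝ)) → ∃ q : ℚ, xstar = (q : ℝ)) := by
  set F : ℝ → ℝ := fun x : ℝ => Polynomial.aeval x f with hF
  set G : ℝ[X] := f.map (algebraMap ℚ ℝ) with hGdef
  have hFG : ∀ x : ℝ, F x = G.eval x := fun x => by
    rw [hF, hGdef]; simp only [aeval_def, eval_map]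
  have hGdeg : G.degree = 4 := by rw [hGdef, degree_map]; exact hdeg
  have hGdegpos : 0 < G.degree := by rw [hGdeg]; norm_num
  have hGnat : G.natDegree = 4 := natDegree_eq_of_degree_eq_some hGdeg
  -- the reflected polynomial
  set G2 : ℝ[X] := G.comp (-X) with hG2def
  have hG2eval : ∀ x : ℝ, G2.eval x = G.eval (-x) := fun x => by
    rw [hG2def]; simp [eval_comp]
  have hG2lc : G2.leadingCoeff = G.leadingCoeff := by
    rw [hG2def, leadingCoeff_comp (by simp)]; simp [hGnat]; norm_num
  have hG2ne : G2 ≠ 0 := by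
    intro hz
    have hg : G ≠ 0 := fun hz' => by simp [hz'] at hGdeg
    rw [← leadingCoeff_ne_zero] at hg
    rw [← hG2lc, hz] at hg
    simp at hg
  have hG2nat : G2.natDegree = 4 := by
    rw [hG2def, natDegree_comp]; simp [hGnat]
  have hG2deg : G2.degree = 4 := by
    rw [degree_eq_natDegree hG2ne, hG2nat]; rfl
  have hG2degpos : 0 < G2.degree := by rw [hG2deg]; norm_num
  -- leading coefficient is positive
  have hlcpos : 0 < G.leadingCoeff := by
    rcases lt_or_ge 0 G.leadingCoeff with h | h
    · exact h
    · exfalso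
      have h1 : Tendsto (fun x => G.eval x) atTop atBot :=
        tendsto_atBot_of_leadingCoeff_nonpos G hGdegpos h
      have h2 : Tendsto (fun x => G2.eval x) atTop atBot :=
        tendsto_atBot_of_leadingCoeff_nonpos G2 hG2degpos (hG2lc ▸ h)
      have hev : ∀ᶠ t : ℝ in atTop, G.eval t < G.eval 0 ∧ G2.eval t < G.eval 0 :=
        (h1.eventually (eventually_lt_atBot (G.eval 0))).and
          (h2.eventually (eventually_lt_atBot (G.eval 0)))
      obtain ⟨t, ht1, ht2⟩ := hev.exists
      rw [hG2eval] at ht2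
      have hc := hconv.2 (Set.mem_univ t) (Set.mem_univ (-t))
        (by norm_num : (0:ℝ) ≤ 1/2) (by norm_num : (0:ℝ) ≤ 1/2) (by norm_num)
      simp only [smul_eq_mul] at hc
      have hmid : (1/2 : ℝ) * t + (1/2 : ℝ) * (-t) = 0 := by ring
      rw [hmid] at hc
      rw [hFG t, hFG (-t), hFG 0] at hc
      linarith
  -- existence of a global minimizer
  have htop : Tendsto (fun x => G.eval x) atTop atTop :=
    tendsto_atTop_of_leadingCoeff_nonneg G hGdegpos hlcpos.le
  have hbot : Tendsto (fun x => G.eval x) atBot atTop := by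
    have h2 : Tendsto (fun x => G2.eval x) atTop atTop :=
      tendsto_atTop_of_leadingCoeff_nonneg G2 hG2degpos (hG2lc ▸ hlcpos.le)
    have heq : (fun x : ℝ => G.eval x) = (fun x => G2.eval x) ∘ Neg.neg := by
      funext x; simp [hG2eval]
    rw [heq]
    exact h2.comp tendsto_neg_atBot_atTop
  have hcoc : Tendsto (fun x => G.eval x) (cocompact ℝ) atTop := by
    rw [cocompact_eq_atBot_atTop]
    exact tendsto_sup.mpr ⟨hbot, htop⟩
  obtain ⟨xstar, hmin⟩ := (G.continuous_aeval).exists_forall_le hcoc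
  have hminF : ∀ x : ℝ, F xstar ≤ F x := fun x => by
    rw [hFG, hFG]; exact hmin x
  -- uniqueness of the minimizer
  have huniq : ∀ y : ℝ, (∀ x : ℝ, F y ≤ F x) → y = xstar := by
    intro y hy
    by_contra hne
    have hFy : F y = F xstar := le_antisymm (hy xstar) (hminF y)
    set m : ℝ := F xstar with hm
    set u := min y xstar with hu
    set v := max y xstar with hv
    have huv : u < v := min_lt_max.mpr hne
    have hFu : F u = m := by
      rcases min_cases y xstar with ⟨h, _⟩ | ⟨h, _⟩ <;> rw [hu, h]
      · exact hFy
    have hFv : F v = m := by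
      rcases max_cases y xstar with ⟨h, _⟩ | ⟨h, _⟩ <;> rw [hv, h]
      · exact hFy
    have hroots : Set.Icc u v ⊆ {x | (G - C m).IsRoot x} := by
      intro z hz
      have hseg : z ∈ segment ℝ u v := by rw [segment_eq_Icc huv.le]; exact hz
      obtain ⟨a, b, ha, hb, hab, hz'⟩ := hseg
      have hc := hconv.2 (Set.mem_univ u) (Set.mem_univ v) ha hb hab
      simp only [smul_eq_mul] at hc hz'
      rw [hz'] at hc
      have hle : F z ≤ m := by
        calc F z ≤ a * F u + b * F v := hc
        _ = m := by rw [hFu, hFv, ← add_mul, hab, one_mul]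
      have hge : m ≤ F z := hminF z
      have hFz : F z = m := le_antisymm hle hge
      simp only [Set.mem_setOf_eq, IsRoot, eval_sub, eval_C]
      rw [← hFG z, hFz, sub_self]
    have hinf : Set.Infinite {x | (G - C m).IsRoot x} :=
      Set.Infinite.mono hroots (Set.Icc_infinite huv)
    have hzero : G - C m = 0 := eq_zero_of_infinite_isRoot _ hinf
    have : (G - C m).degree = 4 := by
      rw [degree_sub_C hGdegpos]; exact hGdeg
    rw [hzero] at this
    simp at this
  -- rationality of the minimizer
  refine ⟨xstar, hminF, huniq, ?_⟩
  rintro ⟨m', hm'⟩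
  set h : ℚ[X] := f - C m' with hhdef
  have hhdeg : h.degree = 4 := by
    rw [hhdef, degree_sub_C (by rw [hdeg]; norm_num)]; exact hdeg
  have hhne : h ≠ 0 := fun hz => by rw [hz] at hhdeg; simp at hhdeg
  have haevh : aeval xstar h = 0 := by
    rw [hhdef, map_sub, aeval_C, eq_ratCast, hm', sub_self]
  have halg : IsAlgebraic ℚ xstar := ⟨h, hhne, haevh⟩
  have hint : IsIntegral ℚ xstar := halg.isIntegral
  set p : ℚ[X] := minpoly ℚ xstar with hpdef
  have hpne : p ≠ 0 := minpoly.ne_zero hint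
  have hpdvd : p ∣ h := minpoly.dvd ℚ xstar haevh
  -- the derivative also vanishes at xstar
  have hFdiff : ∀ x : ℝ, deriv (fun t => G.eval t) x = G.derivative.eval x := fun x =>
    Polynomial.deriv G
  have hlocmin : IsLocalMin (fun t => G.eval t) xstar := by
    apply Filter.Eventually.of_forall
    intro x
    have hx := hminF x
    rw [hFG, hFG] at hx
    exact hx
  have hder0 : G.derivative.eval xstar = 0 := by
    rw [← hFdiff]; exact hlocmin.deriv_eq_zero
  have haevd : aeval xstar (derivative h) = 0 := by
    rw [hhdef, derivative_sub, derivative_C, sub_zero, aeval_def, ← eval_map,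
      ← derivative_map]
    exact hder0
  have hpdvd' : p ∣ derivative h := minpoly.dvd ℚ xstar haevd
  have hpirr : Irreducible p := minpoly.irreducible hint
  have hprime : Prime p := hpirr.prime
  have hpnatpos : 0 < p.natDegree := minpoly.natDegree_pos hint
  have hpdne : derivative p ≠ 0 := by
    intro hz
    have := natDegree_eq_zero_of_derivative_eq_zero hz
    omega
  -- p^2 divides h
  obtain ⟨q0, hq0⟩ := hpdvd
  have hq0ne : q0 ≠ 0 := fun hz => hhne (by rw [hq0, hz, mul_zero])
  have hpq : p ∣ q0 := by
    have hdh : derivative h = derivative p * q0 + p * derivative q0 := by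
      rw [hq0, derivative_mul]
    have h1 : p ∣ derivative p * q0 := by
      have : p ∣ p * derivative q0 := Dvd.intro _ rfl
      have h2 : p ∣ derivative p * q0 + p * derivative q0 := hdh ▸ hpdvd'
      exact (dvd_add_right this).mp (by rwa [add_comm] at h2)
    rcases hprime.2.2 _ _ h1 with h2 | h2
    · exfalso
      have := Polynomial.degree_le_of_dvd h2 hpdne
      have hlt := Polynomial.degree_derivative_lt hpne
      exact absurd (lt_of_le_of_lt this hlt) (lt_irrefl _)
    · exact h2
  obtain ⟨r0, hr0⟩ := hpq
  have hr0ne : r0 ≠ 0 := fun hz => hq0ne (by rw [hr0, hz, mul_zero])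
  have hhfact : h = p * p * r0 := by rw [hq0, hr0, mul_assoc]
  have hhnat : h.natDegree = 4 := natDegree_eq_of_degree_eq_some hhdeg
  have hnatsum : 4 = p.natDegree + p.natDegree + r0.natDegree := by
    rw [← hhnat, hhfact, natDegree_mul (mul_ne_zero hpne hpne) hr0ne,
      natDegree_mul hpne hpne]
  have hple : p.natDegree ≤ 2 := by omega
  -- case analysis on the degree of the minimal polynomial
  interval_cases hn : p.natDegree
  · -- degree 1: xstar is rational
    have hdeg1 : p.degree = 1 := by
      rw [degree_eq_natDegree hpne, hn]; rfl
    obtain ⟨q, hq⟩ := minpoly.mem_range_of_degree_eq_one ℚ xstar hdeg1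
    exact ⟨q, by rw [← hq, eq_ratCast]⟩
  · -- degree 2: contradiction with uniqueness + separability
    exfalso
    set P : ℝ[X] := p.map (algebraMap ℚ ℝ) with hPdef
    have hPne : P ≠ 0 := by
      rw [hPdef]; exact (Polynomial.map_ne_zero_iff (algebraMap ℚ ℝ).injective).mpr hpne
    have hPdeg : P.degree = 2 := by
      rw [hPdef, degree_map, degree_eq_natDegree hpne, hn]; rfl
    have hPx : P.eval xstar = 0 := by
      rw [hPdef, eval_map, ← aeval_def]; exact minpoly.aeval ℚ xstar
    obtain ⟨Q, hQ⟩ := (dvd_iff_isRoot.mpr hPx : (X - C xstar) ∣ P)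
    have hQne : Q ≠ 0 := fun hz => hPne (by rw [hQ, hz, mul_zero])
    have hQdeg : Q.degree = 1 := by
      have hdm : P.degree = 1 + Q.degree := by
        rw [hQ, degree_mul, degree_X_sub_C]
      rw [hPdeg, degree_eq_natDegree hQne] at hdm
      have h2 : (2:ℕ) = 1 + Q.natDegree := by exact_mod_cast hdm
      have h3 : Q.natDegree = 1 := by omega
      rw [degree_eq_natDegree hQne, h3]; rfl
    have hQc1 : Q.coeff 1 ≠ 0 := coeff_ne_zero_of_eq_degree hQdeg
    set r : ℝ := -(Q.coeff 0) / (Q.coeff 1) with hrdef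
    have hQr : Q.eval r = 0 := by
      conv_lhs => rw [eq_X_add_C_of_degree_le_one hQdeg.le]
      simp only [eval_add, eval_mul, eval_C, eval_X, hrdef]
      field_simp
      ring
    have hPr : P.eval r = 0 := by rw [hQ, eval_mul, hQr, mul_zero]
    -- r is also a global minimizer
    have haevr : aeval r h = 0 := by
      rw [hq0, map_mul]
      have : aeval r p = 0 := by
        rw [aeval_def, ← eval_map, ← hPdef, hPr]
      rw [this, zero_mul]
    have hFr : F r = F xstar := by
      have : aeval r f - (m' : ℝ) = 0 := by
        rw [hhdef, map_sub, aeval_C, eq_ratCast] at haevr; exact haevr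
      rw [hF]; simp only
      rw [hm']; linarith [this]
    have hrmin : ∀ x : ℝ, F r ≤ F x := fun x => hFr ▸ hminF x
    have hrx : r = xstar := huniq r hrmin
    -- double root contradicts separability
    have hQx : Q.eval xstar = 0 := hrx ▸ hQr
    obtain ⟨R, hR⟩ := (dvd_iff_isRoot.mpr hQx : (X - C xstar) ∣ Q)
    have hsq : (X - C xstar) * (X - C xstar) ∣ P :=
      ⟨R, by rw [hQ, hR, mul_assoc]⟩
    have hsep : P.Separable := by
      rw [hPdef]; exact (hpirr.separable).map
    exact not_isUnit_X_sub_C xstar (hsep.squarefree _ hsq)
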